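/- For every prime power q and positive integers c, ℓ, and L ≤ q^ℓ, and every subset S ⊆ F_q^ℓ with |S| = L, there exists w ∈ F_q^ℓ such that S + w contains a c-increasing sequence of length at least (1/c)·log_q(L/2) − (1 − 1/c)·log_q((q−1)ℓ). -/

import Mathlib

open scoped Classical

section CISAux

variable {F : Type} [Field F] [Fintype F]

/-- The (finset) support of a vector. -/
private noncomputable def suppF {ℓ : ℕ} (δ : Fin ℓ → F) : Finset (Fin ℓ) :=
  Finset.univ.filter (fun a => δ a ≠ 0)

private lemma mem_suppF {ℓ : ℕ} {δ : Fin ℓ → F} {a : Fin ℓ} :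
    a ∈ suppF δ ↔ δ a ≠ 0 := by simp [suppF]

private lemma suppF_zero {ℓ : ℕ} : suppF (0 : Fin ℓ → F) = ∅ := by
  ext a; simp [mem_suppF]

private lemma suppF_update_subset {ℓ : ℕ} (δ : Fin ℓ → F) (a : Fin ℓ) (v : F) :
    suppF (Function.update δ a v) ⊆ insert a (suppF δ) := by
  intro b hb
  rcases eq_or_ne b a with rfl | hba
  · exact Finset.mem_insert_self _ _
  · rw [mem_suppF, Function.update_of_ne hba] at hb
    exact Finset.mem_insert_of_mem (mem_suppF.mpr hb)

private lemma suppF_update_eq {ℓ : ℕ} (δ : Fin ℓ → F) (a : Fin ℓ) (v : F)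
    (ha : δ a = 0) (hv : v ≠ 0) :
    suppF (Function.update δ a v) = insert a (suppF δ) := by
  ext b
  rcases eq_or_ne b a with rfl | hba
  · simp [mem_suppF, Function.update_self, hv]
  · simp [mem_suppF, Function.update_of_ne hba, Finset.mem_insert, hba]

private lemma maj_exists {ℓ : ℕ} (C : Finset (Fin ℓ → F)) (a : Fin ℓ) :
    ∃ m : F, C.card ≤ Fintype.card F * (C.filter (fun t => t a = m)).card := by
  obtain ⟨m, -, hm⟩ := Finset.exists_max_image (Finset.univ : Finset F)
      (fun m => (C.filter (fun t => t a = m)).card) ⟨0, Finset.mem_univ 0⟩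
  refine ⟨m, ?_⟩
  have h1 : C.card = ∑ b ∈ Finset.univ, (C.filter (fun t => t a = b)).card :=
    Finset.card_eq_sum_card_fiberwise (fun x _ => Finset.mem_univ _)
  have h2 : ∑ b ∈ Finset.univ, (C.filter (fun t => t a = b)).card ≤
      (Finset.univ : Finset F).card • (C.filter (fun t => t a = m)).card :=
    Finset.sum_le_card_nsmul _ _ _ (fun b _ => hm b (Finset.mem_univ b))
  rw [h1]
  simpa [Finset.card_univ, smul_eq_mul] using h2

/-- A choice of majority value of `C` at coordinate `a`. -/
private noncomputable def majVal {ℓ : ℕ} (C : Finset (Fin ℓ → F)) (a : Fin ℓ) : F :=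
  Classical.choose (maj_exists C a)

private lemma majVal_spec {ℓ : ℕ} (C : Finset (Fin ℓ → F)) (a : Fin ℓ) :
    C.card ≤ Fintype.card F * (C.filter (fun t => t a = majVal C a)).card :=
  Classical.choose_spec (maj_exists C a)

/-- Scan the coordinates in the list in order, keeping a current class `C` of
candidates and a fuel counter.  At each coordinate where the witness `x`
disagrees with the majority of the current class (and fuel remains), record the
difference and cut the class to the majority fiber. Returns the record vector. -/
private noncomputable def scanD {ℓ : ℕ} :
    List (Fin ℓ) → Finset (Fin ℓ → F) → ℕ → (Fin ℓ → F) → (Fin ℓ → F)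
  | [], _, _, _ => 0
  | a :: as, C, fuel, x =>
    if x a = majVal C a ∨ fuel = 0 then scanD as C fuel x
    else Function.update
        (scanD as (C.filter (fun t => t a = majVal C a)) (fuel - 1) x) a
        (x a - majVal C a)

private lemma scanD_mem {ℓ : ℕ} :
    ∀ (as : List (Fin ℓ)) (C : Finset (Fin ℓ → F)) (fuel : ℕ) (x : Fin ℓ → F) (a : Fin ℓ),
      scanD as C fuel x a ≠ 0 → a ∈ as
  | [], C, fuel, x, a => by
    intro h; simp [scanD] at h
  | b :: as, C, fuel, x, a => by
    intro h
    simp only [scanD] at h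
    split at h
    · exact List.mem_cons_of_mem _ (scanD_mem as C fuel x a h)
    · rcases eq_or_ne a b with rfl | hab
      · exact List.mem_cons_self
      · rw [Function.update_of_ne hab] at h
        exact List.mem_cons_of_mem _ (scanD_mem as _ _ x a h)

private lemma scanD_card {ℓ : ℕ} :
    ∀ (as : List (Fin ℓ)) (C : Finset (Fin ℓ → F)) (fuel : ℕ) (x : Fin ℓ → F),
      (suppF (scanD as C fuel x)).card ≤ fuel
  | [], C, fuel, x => by simp [scanD, suppF_zero]
  | b :: as, C, fuel, x => by
    simp only [scanD]
    split
    · exact scanD_card as C fuel x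
    · rename_i hcond
      push_neg at hcond
      calc (suppF (Function.update (scanD as (C.filter (fun t => t b = majVal C b))
              (fuel - 1) x) b (x b - majVal C b))).card
          ≤ (insert b (suppF (scanD as (C.filter (fun t => t b = majVal C b))
              (fuel - 1) x))).card :=
            Finset.card_le_card (suppF_update_subset _ _ _)
        _ ≤ (suppF (scanD as (C.filter (fun t => t b = majVal C b)) (fuel - 1) x)).card + 1 :=
            Finset.card_insert_le _ _
        _ ≤ (fuel - 1) + 1 := Nat.add_le_add_right (scanD_card as _ _ x) 1
        _ = fuel := by omega

private lemma scanD_class {ℓ : ℕ} :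
    ∀ (as : List (Fin ℓ)) (C : Finset (Fin ℓ → F)) (fuel : ℕ) (x : Fin ℓ → F),
      as.Nodup →
      C.card ≤ Fintype.card F ^ (suppF (scanD as C fuel x)).card *
        (C.filter (fun t => ∀ a ∈ suppF (scanD as C fuel x),
            t a = x a - scanD as C fuel x a)).card
  | [], C, fuel, x => by
    intro _
    have h0 : scanD ([] : List (Fin ℓ)) C fuel x = 0 := by simp [scanD]
    rw [h0, suppF_zero]
    have : C.filter (fun t => ∀ a ∈ (∅ : Finset (Fin ℓ)), t a = x a - (0 : Fin ℓ → F) a) = C :=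
      Finset.filter_true_of_mem (fun t _ => by simp)
    rw [this]
    simp only [Finset.card_empty, pow_zero, one_mul]
    exact le_refl _
  | b :: as, C, fuel, x => by
    intro hnd
    have hndtail : as.Nodup := (List.nodup_cons.mp hnd).2
    have hbnot : b ∉ as := (List.nodup_cons.mp hnd).1
    simp only [scanD]
    split
    · exact scanD_class as C fuel x hndtail
    · rename_i hcond
      push_neg at hcond
      obtain ⟨hxb, hf⟩ := hcond
      set m := majVal C b with hm
      set C' := C.filter (fun t => t b = m) with hC'
      set δ'' := scanD as C' (fuel - 1) x with hδ''
      set δ := Function.update δ'' b (x b - m) with hδdef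
      have hb0 : δ'' b = 0 := by
        by_contra h
        exact hbnot (scanD_mem as C' (fuel - 1) x b h)
      have hvne : x b - m ≠ 0 := sub_ne_zero.mpr hxb
      have hsupp : suppF δ = insert b (suppF δ'') := suppF_update_eq δ'' b _ hb0 hvne
      have hbmem : b ∉ suppF δ'' := by rw [mem_suppF]; exact fun h => h hb0
      have hcard : (suppF δ).card = (suppF δ'').card + 1 := by
        rw [hsupp, Finset.card_insert_of_notMem hbmem]
      have hfilter : C.filter (fun t => ∀ a ∈ suppF δ, t a = x a - δ a)
          = C'.filter (fun t => ∀ a ∈ suppF δ'', t a = x a - δ'' a) := by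
        rw [hC', Finset.filter_filter]
        apply Finset.filter_congr
        intro t _
        constructor
        · intro h
          have hbA : b ∈ suppF δ := by rw [hsupp]; exact Finset.mem_insert_self _ _
          have htb : t b = m := by
            have h1 := h b hbA
            rw [hδdef, Function.update_self] at h1
            rw [h1]; ring
          refine ⟨htb, ?_⟩
          intro a ha
          have hab : a ≠ b := by rintro rfl; exact hbmem ha
          have h2 := h a (by rw [hsupp]; exact Finset.mem_insert_of_mem ha)
          rwa [hδdef, Function.update_of_ne hab] at h2
        · rintro ⟨htb, h⟩ a ha
          rw [hsupp] at ha
          rcases Finset.mem_insert.mp ha with rfl | ha2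
          · rw [hδdef, Function.update_self, htb]; ring
          · have hab : a ≠ b := by rintro rfl; exact hbmem ha2
            rw [hδdef, Function.update_of_ne hab]
            exact h a ha2
      calc C.card ≤ Fintype.card F * C'.card := majVal_spec C b
        _ ≤ Fintype.card F * (Fintype.card F ^ (suppF δ'').card *
              (C'.filter (fun t => ∀ a ∈ suppF δ'', t a = x a - δ'' a)).card) :=
            Nat.mul_le_mul_left _ (scanD_class as C' (fuel - 1) x hndtail)
        _ = Fintype.card F ^ (suppF δ).card *
              (C.filter (fun t => ∀ a ∈ suppF δ, t a = x a - δ a)).card := by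
            rw [hfilter, hcard, pow_succ]; ring

private lemma scanD_reconstruct {ℓ : ℕ} :
    ∀ (as : List (Fin ℓ)) (C : Finset (Fin ℓ → F)) (fuel : ℕ) (x y : Fin ℓ → F),
      as.Nodup →
      scanD as C fuel x = scanD as C fuel y →
      (suppF (scanD as C fuel x)).card < fuel →
      ∀ a ∈ as, x a = y a
  | [], C, fuel, x, y => by intro _ _ _ a ha; simp at ha
  | b :: as, C, fuel, x, y => by
    intro hnd heq hlt a ha
    have hndtail : as.Nodup := (List.nodup_cons.mp hnd).2
    have hbnot : b ∉ as := (List.nodup_cons.mp hnd).1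
    have hf : fuel ≠ 0 := by omega
    set m := majVal C b with hm
    by_cases hx : x b = m <;> by_cases hy : y b = m
    · -- both agree
      have hex : scanD (b :: as) C fuel x = scanD as C fuel x := by
        simp only [scanD]; rw [if_pos (Or.inl hx)]
      have hey : scanD (b :: as) C fuel y = scanD as C fuel y := by
        simp only [scanD]; rw [if_pos (Or.inl hy)]
      rw [hex, hey] at heq
      rw [hex] at hlt
      rcases List.mem_cons.mp ha with rfl | ha2
      · rw [hx, hy]
      · exact scanD_reconstruct as C fuel x y hndtail heq hlt a ha2
    · -- x agrees, y cuts : contradiction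
      exfalso
      have hex : scanD (b :: as) C fuel x = scanD as C fuel x := by
        simp only [scanD]; rw [if_pos (Or.inl hx)]
      have hey : scanD (b :: as) C fuel y =
          Function.update (scanD as (C.filter (fun t => t b = m)) (fuel - 1) y) b (y b - m) := by
        simp only [scanD]; rw [if_neg (by push_neg; exact ⟨hy, hf⟩)]
      have h1 : scanD as C fuel x b = 0 := by
        by_contra h; exact hbnot (scanD_mem as C fuel x b h)
      have h2 := congrFun heq b
      rw [hex, hey] at h2
      rw [h1, Function.update_self] at h2
      exact (sub_ne_zero.mpr hy) h2.symm
    · -- y agrees, x cuts : contradiction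
      exfalso
      have hey : scanD (b :: as) C fuel y = scanD as C fuel y := by
        simp only [scanD]; rw [if_pos (Or.inl hy)]
      have hex : scanD (b :: as) C fuel x =
          Function.update (scanD as (C.filter (fun t => t b = m)) (fuel - 1) x) b (x b - m) := by
        simp only [scanD]; rw [if_neg (by push_neg; exact ⟨hx, hf⟩)]
      have h1 : scanD as C fuel y b = 0 := by
        by_contra h; exact hbnot (scanD_mem as C fuel y b h)
      have h2 := congrFun heq b
      rw [hex, hey] at h2
      rw [h1, Function.update_self] at h2
      exact (sub_ne_zero.mpr hx) h2
    · -- both cut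
      set C' := C.filter (fun t => t b = m) with hC'
      set tx := scanD as C' (fuel - 1) x with htx
      set ty := scanD as C' (fuel - 1) y with hty
      have hex : scanD (b :: as) C fuel x = Function.update tx b (x b - m) := by
        simp only [scanD]; rw [if_neg (by push_neg; exact ⟨hx, hf⟩)]
      have hey : scanD (b :: as) C fuel y = Function.update ty b (y b - m) := by
        simp only [scanD]; rw [if_neg (by push_neg; exact ⟨hy, hf⟩)]
      rw [hex, hey] at heq
      have htxb : tx b = 0 := by
        by_contra h; exact hbnot (scanD_mem as C' (fuel - 1) x b h)
      have htyb : ty b = 0 := by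
        by_contra h; exact hbnot (scanD_mem as C' (fuel - 1) y b h)
      have hhead : x b = y b := by
        have h2 := congrFun heq b
        rw [Function.update_self, Function.update_self] at h2
        exact sub_left_injective h2
      have htails : tx = ty := by
        funext a'
        rcases eq_or_ne a' b with rfl | hab
        · rw [htxb, htyb]
        · have h2 := congrFun heq a'
          rwa [Function.update_of_ne hab, Function.update_of_ne hab] at h2
      have hsx : suppF (Function.update tx b (x b - m)) = insert b (suppF tx) :=
        suppF_update_eq tx b _ htxb (sub_ne_zero.mpr hx)
      have hbmem : b ∉ suppF tx := by rw [mem_suppF]; exact fun h => h htxb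
      have hcard2 : (suppF tx).card < fuel - 1 := by
        rw [hex, hsx, Finset.card_insert_of_notMem hbmem] at hlt
        omega
      rcases List.mem_cons.mp ha with rfl | ha2
      · exact hhead
      · exact scanD_reconstruct as C' (fuel - 1) x y hndtail (by rw [← htx, ← hty, htails]) hcard2 a ha2

private lemma cis_ball_pos {ℓ c : ℕ} (hc : 0 < c) :
    0 < ((Finset.univ : Finset (Fin ℓ → F)).filter (fun δ => (suppF δ).card < c)).card := by
  apply Finset.card_pos.mpr
  refine ⟨0, Finset.mem_filter.mpr ⟨Finset.mem_univ _, ?_⟩⟩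
  rw [suppF_zero]
  simpa using hc

/-- Key step: in a set larger than the ball of radius `c-1`, there is a pattern `β`
on a `c`-set `A` whose class is a `q^c` fraction of `T`, together with a witness
`x ∈ T` differing from `β` on all of `A`. -/
private lemma cis_crux {ℓ c : ℕ} (hc : 0 < c) (T : Finset (Fin ℓ → F))
    (hT : ((Finset.univ : Finset (Fin ℓ → F)).filter (fun δ => (suppF δ).card < c)).card
        < T.card) :
    ∃ (A : Finset (Fin ℓ)) (β : Fin ℓ → F) (x : Fin ℓ → F) (C₁ : Finset (Fin ℓ → F)),
      x ∈ T ∧ A.card = c ∧ (∀ a ∈ A, x a ≠ β a) ∧ C₁ ⊆ T ∧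
      (∀ t ∈ C₁, ∀ a ∈ A, t a = β a) ∧
      T.card ≤ Fintype.card F ^ c * C₁.card := by
  classical
  set coords := List.finRange ℓ with hcoords
  have hnodup : coords.Nodup := List.nodup_finRange ℓ
  set Bad := T.filter (fun x => (suppF (scanD coords T c x)).card < c) with hBad
  have hinj : Set.InjOn (fun x => scanD coords T c x) ↑Bad := by
    intro x hx y hy hxy
    have hx' : (suppF (scanD coords T c x)).card < c := by
      have := hx
      rw [hBad] at this
      simp only [Finset.coe_filter, Set.mem_setOf_eq] at this
      exact this.2
    funext a
    exact scanD_reconstruct coords T c x y hnodup hxy hx' a (List.mem_finRange a)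
  have hmaps : ∀ x ∈ Bad, scanD coords T c x ∈
      (Finset.univ : Finset (Fin ℓ → F)).filter (fun δ => (suppF δ).card < c) := by
    intro x hx
    rw [hBad, Finset.mem_filter] at hx
    exact Finset.mem_filter.mpr ⟨Finset.mem_univ _, hx.2⟩
  have hbadcard : Bad.card ≤
      ((Finset.univ : Finset (Fin ℓ → F)).filter (fun δ => (suppF δ).card < c)).card :=
    Finset.card_le_card_of_injOn _ hmaps hinj
  have hBadlt : Bad.card < T.card := lt_of_le_of_lt hbadcard hT
  have hnotsub : ¬ T ⊆ Bad := fun hsub => absurd (Finset.card_le_card hsub) (by omega)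
  obtain ⟨x, hxT, hxBad⟩ := Finset.not_subset.mp hnotsub
  have hxcard : ¬ (suppF (scanD coords T c x)).card < c :=
    fun h => hxBad (Finset.mem_filter.mpr ⟨hxT, h⟩)
  have hxle : (suppF (scanD coords T c x)).card ≤ c := scanD_card coords T c x
  have hxeq : (suppF (scanD coords T c x)).card = c := by omega
  set δ := scanD coords T c x with hδ
  refine ⟨suppF δ, fun a => x a - δ a, x,
    T.filter (fun t => ∀ a ∈ suppF δ, t a = x a - δ a), hxT, hxeq, ?_,
    Finset.filter_subset _ _, ?_, ?_⟩
  · intro a ha hcontra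
    have hne : δ a ≠ 0 := mem_suppF.mp ha
    apply hne
    have h2 : x a - δ a = x a := hcontra.symm
    exact sub_eq_self.mp h2
  · intro t ht a ha
    exact (Finset.mem_filter.mp ht).2 a ha
  · have h := scanD_class coords T c x hnodup
    rw [← hδ, hxeq] at h
    exact h

/-- The core chain-building lemma. -/
private lemma cis_core {ℓ c : ℕ} (hc : 0 < c) :
    ∀ (d : ℕ) (S : Finset (Fin ℓ → F)),
      ((Finset.univ : Finset (Fin ℓ → F)).filter (fun δ => (suppF δ).card < c)).card *
        Fintype.card F ^ (c * d) < S.card →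
      ∃ (z : Fin ℓ → F) (x : ℕ → Fin ℓ → F) (A : ℕ → Finset (Fin ℓ)),
        (∀ i, i ≤ d → x i ∈ S) ∧ (∀ i, i ≤ d → (A i).card = c) ∧
        (∀ i, i ≤ d → ∀ a ∈ A i, x i a ≠ z a) ∧
        (∀ i j, i < j → j ≤ d → ∀ a ∈ A j, x i a = z a) ∧
        (∀ i, i ≤ d → ∀ a ∈ A i, ∃ t ∈ S, ∃ t' ∈ S, t a ≠ t' a) := by
  intro d
  induction d with
  | zero =>
    intro S hS
    rw [Nat.mul_zero, pow_zero, Nat.mul_one] at hS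
    obtain ⟨A, β, x₀, C₁, hx₀T, hAcard, hoff, hC₁sub, hC₁pat, hclass⟩ := cis_crux hc S hS
    have hballpos := cis_ball_pos (F := F) (ℓ := ℓ) hc
    have hC₁pos : 0 < C₁.card := by
      rcases Nat.eq_zero_or_pos C₁.card with h0 | h
      · exfalso; rw [h0, Nat.mul_zero] at hclass; omega
      · exact h
    obtain ⟨t₀, ht₀⟩ := Finset.card_pos.mp hC₁pos
    have P3 : ∀ i, i ≤ 0 → ∀ a ∈ A, x₀ a ≠ (if a ∈ A then β a else 0) := by
      intro i _ a ha
      rw [if_pos ha]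
      exact hoff a ha
    have P5 : ∀ i, i ≤ 0 → ∀ a ∈ A, ∃ t ∈ S, ∃ t' ∈ S, t a ≠ t' a := by
      intro i _ a ha
      refine ⟨t₀, hC₁sub ht₀, x₀, hx₀T, ?_⟩
      rw [hC₁pat t₀ ht₀ a ha]
      exact fun hcon => hoff a ha hcon.symm
    exact ⟨fun a => if a ∈ A then β a else 0, fun _ => x₀, fun _ => A,
      fun _ _ => hx₀T, fun _ _ => hAcard, P3, fun i j hij hj => by omega, P5⟩
  | succ d ih =>
    intro S hS
    have hqpos : 0 < Fintype.card F := Fintype.card_pos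
    have hballpos := cis_ball_pos (F := F) (ℓ := ℓ) hc
    have hBall_lt :
        ((Finset.univ : Finset (Fin ℓ → F)).filter (fun δ => (suppF δ).card < c)).card
          < S.card := by
      have h1 : ((Finset.univ : Finset (Fin ℓ → F)).filter
            (fun δ => (suppF δ).card < c)).card * 1 ≤
          ((Finset.univ : Finset (Fin ℓ → F)).filter
            (fun δ => (suppF δ).card < c)).card * Fintype.card F ^ (c * (d + 1)) :=
        Nat.mul_le_mul_left _ (Nat.one_le_iff_ne_zero.mpr (pow_ne_zero _ (by omega)))
      omega
    obtain ⟨A', β', x', C₁, hx'T, hA'card, hoff', hC₁sub, hC₁pat, hclass⟩ :=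
      cis_crux hc S hBall_lt
    have hS₁ :
        ((Finset.univ : Finset (Fin ℓ → F)).filter (fun δ => (suppF δ).card < c)).card *
          Fintype.card F ^ (c * d) < C₁.card := by
      apply Nat.lt_of_mul_lt_mul_left (a := Fintype.card F ^ c)
      calc Fintype.card F ^ c *
            (((Finset.univ : Finset (Fin ℓ → F)).filter
              (fun δ => (suppF δ).card < c)).card * Fintype.card F ^ (c * d))
          = ((Finset.univ : Finset (Fin ℓ → F)).filter
              (fun δ => (suppF δ).card < c)).card * Fintype.card F ^ (c * (d + 1)) := by
            have hexp : c * (d + 1) = c + c * d := by ring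
            rw [hexp, pow_add]; ring
        _ < S.card := hS
        _ ≤ Fintype.card F ^ c * C₁.card := hclass
    obtain ⟨z', x'', A'', g1, g2, g3, g4, g5⟩ := ih C₁ hS₁
    have hdis : ∀ i, i ≤ d → ∀ a ∈ A'' i, a ∉ A' := by
      intro i hi a ha haA'
      obtain ⟨t, ht, t', ht', hne⟩ := g5 i hi a ha
      exact hne ((hC₁pat t ht a haA').trans (hC₁pat t' ht' a haA').symm)
    have hC₁pos : 0 < C₁.card := by
      have : 0 < ((Finset.univ : Finset (Fin ℓ → F)).filter
          (fun δ => (suppF δ).card < c)).card * Fintype.card F ^ (c * d) :=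
        Nat.mul_pos hballpos (pow_pos hqpos _)
      omega
    obtain ⟨t₀, ht₀⟩ := Finset.card_pos.mp hC₁pos
    have P1 : ∀ i, i ≤ d + 1 → (if i ≤ d then x'' i else x') ∈ S := by
      intro i hi
      by_cases h : i ≤ d
      · rw [if_pos h]; exact hC₁sub (g1 i h)
      · rw [if_neg h]; exact hx'T
    have P2 : ∀ i, i ≤ d + 1 → (if i ≤ d then A'' i else A').card = c := by
      intro i hi
      by_cases h : i ≤ d
      · rw [if_pos h]; exact g2 i h
      · rw [if_neg h]; exact hA'card
    have P3 : ∀ i, i ≤ d + 1 → ∀ a ∈ (if i ≤ d then A'' i else A'),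
        (if i ≤ d then x'' i else x') a ≠ (if a ∈ A' then β' a else z' a) := by
      intro i hi a
      by_cases h : i ≤ d
      · rw [if_pos h, if_pos h]
        intro ha
        have hnA' : a ∉ A' := hdis i h a ha
        rw [if_neg hnA']
        exact g3 i h a ha
      · rw [if_neg h, if_neg h]
        intro ha
        rw [if_pos ha]
        exact hoff' a ha
    have P4 : ∀ i j, i < j → j ≤ d + 1 → ∀ a ∈ (if j ≤ d then A'' j else A'),
        (if i ≤ d then x'' i else x') a = (if a ∈ A' then β' a else z' a) := by
      intro i j hij hj a
      by_cases hjd : j ≤ d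
      · rw [if_pos hjd]
        intro ha
        have hnA' : a ∉ A' := hdis j hjd a ha
        rw [if_pos (by omega : i ≤ d), if_neg hnA']
        exact g4 i j hij hjd a ha
      · rw [if_neg hjd]
        intro ha
        rw [if_pos (by omega : i ≤ d), if_pos ha]
        exact hC₁pat (x'' i) (g1 i (by omega)) a ha
    have P5 : ∀ i, i ≤ d + 1 → ∀ a ∈ (if i ≤ d then A'' i else A'),
        ∃ t ∈ S, ∃ t' ∈ S, t a ≠ t' a := by
      intro i hi a
      by_cases h : i ≤ d
      · rw [if_pos h]
        intro ha
        obtain ⟨t, ht, t', ht', hne⟩ := g5 i h a ha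
        exact ⟨t, hC₁sub ht, t', hC₁sub ht', hne⟩
      · rw [if_neg h]
        intro ha
        refine ⟨t₀, hC₁sub ht₀, x', hx'T, ?_⟩
        rw [hC₁pat t₀ ht₀ a ha]
        exact fun hcon => hoff' a ha hcon.symm
    exact ⟨fun a => if a ∈ A' then β' a else z' a,
        fun i => if i ≤ d then x'' i else x',
        fun i => if i ≤ d then A'' i else A', P1, P2, P3, P4, P5⟩

private lemma cis_layer_le {ℓ : ℕ} (hℓ : 0 < ℓ) (k : ℕ) :
    ((Finset.univ : Finset (Fin ℓ → F)).filter (fun δ => (suppF δ).card = k)).card ≤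
      ((Fintype.card F - 1) * ℓ) ^ k := by
  classical
  obtain ⟨y0, hy0⟩ := exists_ne (0 : F)
  have hne : Nonempty (Fin k → Fin ℓ × {y : F // y ≠ 0}) :=
    ⟨fun _ => (⟨0, hℓ⟩, ⟨y0, hy0⟩)⟩
  set f : (Fin ℓ → F) → (Fin k → Fin ℓ × {y : F // y ≠ 0}) := fun δ =>
    if h : (suppF δ).card = k then
      fun j => ((suppF δ).orderEmbOfFin h j,
        ⟨δ ((suppF δ).orderEmbOfFin h j), mem_suppF.mp (Finset.orderEmbOfFin_mem _ h j)⟩)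
    else Classical.arbitrary _ with hf
  have hmaps : ∀ δ ∈ (Finset.univ : Finset (Fin ℓ → F)).filter
      (fun δ => (suppF δ).card = k), f δ ∈ (Finset.univ : Finset (Fin k → Fin ℓ × {y : F // y ≠ 0})) :=
    fun δ _ => Finset.mem_univ _
  have hinj : Set.InjOn f ↑((Finset.univ : Finset (Fin ℓ → F)).filter
      (fun δ => (suppF δ).card = k)) := by
    intro δ1 hm1 δ2 hm2 hfeq
    have h1 : (suppF δ1).card = k := by
      have := hm1; simp only [Finset.coe_filter, Set.mem_setOf_eq] at this; exact this.2
    have h2 : (suppF δ2).card = k := by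
      have := hm2; simp only [Finset.coe_filter, Set.mem_setOf_eq] at this; exact this.2
    rw [hf] at hfeq
    simp only [dif_pos h1, dif_pos h2] at hfeq
    have hemb : ∀ j, (suppF δ1).orderEmbOfFin h1 j = (suppF δ2).orderEmbOfFin h2 j :=
      fun j => congrArg Prod.fst (congrFun hfeq j)
    have hval : ∀ j, δ1 ((suppF δ1).orderEmbOfFin h1 j) = δ2 ((suppF δ2).orderEmbOfFin h2 j) :=
      fun j => congrArg (fun p => (Prod.snd p).1) (congrFun hfeq j)
    have hsupp : suppF δ1 = suppF δ2 := by
      apply Finset.coe_injective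
      rw [← Finset.range_orderEmbOfFin (suppF δ1) h1, ← Finset.range_orderEmbOfFin (suppF δ2) h2]
      have hfe : (⇑((suppF δ1).orderEmbOfFin h1) : Fin k → Fin ℓ)
          = ⇑((suppF δ2).orderEmbOfFin h2) := funext hemb
      rw [hfe]
    funext a
    by_cases haa : a ∈ suppF δ1
    · have hmem : a ∈ (↑(suppF δ1) : Set (Fin ℓ)) := haa
      rw [← Finset.range_orderEmbOfFin (suppF δ1) h1] at hmem
      obtain ⟨j, hj⟩ := hmem
      calc δ1 a = δ1 ((suppF δ1).orderEmbOfFin h1 j) := by rw [hj]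
        _ = δ2 ((suppF δ2).orderEmbOfFin h2 j) := hval j
        _ = δ2 ((suppF δ1).orderEmbOfFin h1 j) := by rw [hemb j]
        _ = δ2 a := by rw [hj]
    · have h2a : a ∉ suppF δ2 := by rw [← hsupp]; exact haa
      have e1 : δ1 a = 0 := by
        by_contra h; exact haa (mem_suppF.mpr h)
      have e2 : δ2 a = 0 := by
        by_contra h; exact h2a (mem_suppF.mpr h)
      rw [e1, e2]
  have hcard := Finset.card_le_card_of_injOn f hmaps hinj
  refine hcard.trans ?_
  rw [Finset.card_univ]
  have hc1 : Fintype.card {y : F // y ≠ 0} = Fintype.card F - 1 := by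
    have := Fintype.card_subtype_compl (fun y : F => y = 0)
    simp only [Fintype.card_subtype_eq] at this
    exact this
  rw [Fintype.card_fun, Fintype.card_prod, Fintype.card_fin, hc1, Fintype.card_fin]
  rw [Nat.mul_comm ℓ (Fintype.card F - 1)]

private lemma cis_geom_le (m n : ℕ) (hm : 2 ≤ m) :
    (∑ k ∈ Finset.range (n + 1), m ^ k) ≤ 2 * m ^ n := by
  induction n with
  | zero => simp
  | succ n ih =>
    rw [Finset.sum_range_succ]
    have h1 : 2 * m ^ n ≤ m ^ (n + 1) := by
      rw [pow_succ, Nat.mul_comm (m ^ n) m]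
      exact Nat.mul_le_mul_right _ hm
    calc (∑ k ∈ Finset.range (n + 1), m ^ k) + m ^ (n + 1)
        ≤ 2 * m ^ n + m ^ (n + 1) := Nat.add_le_add_right ih _
      _ ≤ m ^ (n + 1) + m ^ (n + 1) := Nat.add_le_add_right h1 _
      _ = 2 * m ^ (n + 1) := by ring

private lemma cis_ball_le {ℓ c : ℕ} (hc : 0 < c) (hℓ : 0 < ℓ) :
    ((Finset.univ : Finset (Fin ℓ → F)).filter (fun δ => (suppF δ).card < c)).card ≤
      2 * ((Fintype.card F - 1) * ℓ) ^ (c - 1) := by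
  classical
  have hq : 2 ≤ Fintype.card F := Fintype.one_lt_card
  set m := (Fintype.card F - 1) * ℓ with hm
  rcases Nat.lt_or_ge m 2 with hm2 | hm2
  · -- m = 1, i.e. q = 2 and ℓ = 1
    have hm1 : 1 ≤ m := by
      rw [hm]
      exact Nat.one_le_iff_ne_zero.mpr (Nat.mul_ne_zero (by omega) (by omega))
    have hmeq : m = 1 := by omega
    have hl1 : ℓ = 1 := by
      by_contra h
      have h2 : 2 ≤ ℓ := by omega
      have h3 : 1 * 2 ≤ (Fintype.card F - 1) * ℓ := Nat.mul_le_mul (by omega) h2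
      omega
    have hq1 : Fintype.card F - 1 = 1 := by
      by_contra h
      have h2 : 2 ≤ Fintype.card F - 1 := by omega
      have h3 : 2 * 1 ≤ (Fintype.card F - 1) * ℓ := Nat.mul_le_mul h2 (by omega)
      omega
    have hcard : ((Finset.univ : Finset (Fin ℓ → F)).filter
        (fun δ => (suppF δ).card < c)).card ≤ Fintype.card (Fin ℓ → F) := by
      rw [← Finset.card_univ]
      exact Finset.card_filter_le _ _
    have : Fintype.card (Fin ℓ → F) = 2 := by
      rw [Fintype.card_fun, Fintype.card_fin, hl1, pow_one]
      omega
    rw [hmeq, one_pow]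
    omega
  · obtain ⟨n, rfl⟩ : ∃ n, c = n + 1 := ⟨c - 1, by omega⟩
    have hsum := Finset.card_eq_sum_card_fiberwise
      (f := fun δ : Fin ℓ → F => (suppF δ).card)
      (s := (Finset.univ : Finset (Fin ℓ → F)).filter (fun δ => (suppF δ).card < n + 1))
      (t := Finset.range (n + 1))
      (fun δ hδ => Finset.mem_range.mpr (Finset.mem_filter.mp hδ).2)
    rw [hsum]
    have hstep : ∀ k ∈ Finset.range (n + 1),
        (((Finset.univ : Finset (Fin ℓ → F)).filter (fun δ => (suppF δ).card < n + 1)).filter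
          (fun δ => (suppF δ).card = k)).card ≤ m ^ k := by
      intro k _
      refine le_trans (Finset.card_le_card ?_) (cis_layer_le hℓ k)
      exact Finset.filter_subset_filter _ (Finset.filter_subset _ _)
    calc (∑ k ∈ Finset.range (n + 1),
          (((Finset.univ : Finset (Fin ℓ → F)).filter (fun δ => (suppF δ).card < n + 1)).filter
            (fun δ => (suppF δ).card = k)).card)
        ≤ ∑ k ∈ Finset.range (n + 1), m ^ k := Finset.sum_le_sum hstep
      _ ≤ 2 * m ^ n := cis_geom_le m n hm2
      _ = 2 * m ^ (n + 1 - 1) := by norm_num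

private lemma cis_final_ineq (q c L n M : ℕ) (hq : 2 ≤ q) (hc : 0 < c) (hM : 1 ≤ M)
    (hL : 0 < L) (hle : (L : ℝ) ≤ 2 * (M : ℝ) ^ (c - 1) * (q : ℝ) ^ (c * n)) :
    1 / (c : ℝ) * Real.logb q ((L : ℝ) / 2) -
      (1 - 1 / (c : ℝ)) * Real.logb q (M : ℝ) ≤ (n : ℝ) := by
  have hq1 : (1 : ℝ) < q := by exact_mod_cast hq
  have hM1 : (1 : ℝ) ≤ M := by exact_mod_cast hM
  have hc1 : (1 : ℝ) ≤ c := by exact_mod_cast hc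
  have hMpow : (0 : ℝ) < (M : ℝ) ^ (c - 1) := by positivity
  have hqpow : (0 : ℝ) < (q : ℝ) ^ (c * n) := by positivity
  have hL0 : (0 : ℝ) < (L : ℝ) / 2 := by positivity
  have hlog1 : Real.logb q ((L : ℝ) / 2) ≤
      Real.logb q ((M : ℝ) ^ (c - 1) * (q : ℝ) ^ (c * n)) := by
    apply Real.logb_le_logb_of_le hq1 hL0
    nlinarith [hle]
  have hlog2 : Real.logb q ((M : ℝ) ^ (c - 1) * (q : ℝ) ^ (c * n))
      = ((c : ℝ) - 1) * Real.logb q (M : ℝ) + (c : ℝ) * (n : ℝ) := by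
    rw [Real.logb_mul (ne_of_gt hMpow) (ne_of_gt hqpow), Real.logb_pow, Real.logb_pow,
      Real.logb_self_eq_one hq1]
    have hcast : ((c - 1 : ℕ) : ℝ) = (c : ℝ) - 1 := by
      rw [Nat.cast_sub hc, Nat.cast_one]
    rw [hcast]
    push_cast
    ring
  have hMlog : 0 ≤ Real.logb q (M : ℝ) := Real.logb_nonneg hq1 hM1
  have hcpos : (0 : ℝ) < c := by linarith
  have key : Real.logb q ((L : ℝ) / 2) ≤
      ((c : ℝ) - 1) * Real.logb q (M : ℝ) + (c : ℝ) * (n : ℝ) := by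
    rw [hlog2] at hlog1; exact hlog1
  have h1 : 1 / (c : ℝ) * Real.logb q ((L : ℝ) / 2) ≤
      1 / (c : ℝ) * (((c : ℝ) - 1) * Real.logb q (M : ℝ) + (c : ℝ) * (n : ℝ)) :=
    mul_le_mul_of_nonneg_left key (by positivity)
  have h2 : 1 / (c : ℝ) * (((c : ℝ) - 1) * Real.logb q (M : ℝ) + (c : ℝ) * (n : ℝ))
      = (1 - 1 / (c : ℝ)) * Real.logb q (M : ℝ) + (n : ℝ) := by
    field_simp
  linarith

end CISAux

/-- Sauer–Shelah style lemma: for every prime power `q`, positive integers `c, ℓ`,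
`L ≤ q^ℓ`, and every `S ⊆ F_q^ℓ` with `|S| = L`, there is `w` such that `S + w`
contains a `c`-increasing sequence of length at least
`(1/c)·log_q(L/2) − (1 − 1/c)·log_q((q−1)ℓ)`. -/
theorem c_increasing_sequence (q c ℓ L : ℕ) (F : Type) [Field F] [Fintype F]
    (hq : Fintype.card F = q) (hc : 0 < c) (hℓ : 0 < ℓ) (hL : 0 < L) (hLq : L ≤ q ^ ℓ)
    (S : Finset (Fin ℓ → F)) (hS : S.card = L) :
    ∃ (w : Fin ℓ → F) (d : ℕ) (v : Fin d → Fin ℓ → F),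
      (∀ i, v i ∈ Finset.image (fun s => s + w) S) ∧
      (∀ j : Fin d,
        c ≤ (Function.support (v j) \
              ⋃ (i : Fin d) (_ : i < j), Function.support (v i)).ncard) ∧
      (1 / (c : ℝ)) * Real.logb q ((L : ℝ) / 2) -
          (1 - 1 / (c : ℝ)) * Real.logb q (((q : ℝ) - 1) * ℓ) ≤ (d : ℝ) := by
  subst hq
  have hq2 : 2 ≤ Fintype.card F := Fintype.one_lt_card
  set M := (Fintype.card F - 1) * ℓ with hM
  have hM1 : 1 ≤ M := by
    rw [hM]; exact Nat.one_le_iff_ne_zero.mpr (Nat.mul_ne_zero (by omega) (by omega))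
  have hcast : ((M : ℕ) : ℝ) = ((Fintype.card F : ℝ) - 1) * (ℓ : ℝ) := by
    rw [hM]
    push_cast [Nat.cast_sub (by omega : 1 ≤ Fintype.card F)]
    ring
  rw [show ((Fintype.card F : ℝ) - 1) * (ℓ : ℝ) = ((M : ℕ) : ℝ) from hcast.symm]
  by_cases hcase : L ≤ 2 * M ^ (c - 1)
  · refine ⟨0, 0, fun i => i.elim0, fun i => i.elim0, fun i => i.elim0, ?_⟩
    have hle : (L : ℝ) ≤ 2 * (M : ℝ) ^ (c - 1) * (Fintype.card F : ℝ) ^ (c * 0) := by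
      rw [Nat.mul_zero, pow_zero, mul_one]
      exact_mod_cast hcase
    have := cis_final_ineq (Fintype.card F) c L 0 M hq2 hc hM1 hL hle
    simpa using this
  · push_neg at hcase
    have hBall_le := cis_ball_le (F := F) (ℓ := ℓ) (c := c) hc hℓ
    rw [← hM] at hBall_le
    have hballpos := cis_ball_pos (F := F) (ℓ := ℓ) hc
    have hex : ∃ n, L ≤
        ((Finset.univ : Finset (Fin ℓ → F)).filter (fun δ => (suppF δ).card < c)).card *
          Fintype.card F ^ (c * n) := by
      refine ⟨L, ?_⟩
      have h1 : L < 2 ^ L := Nat.lt_two_pow_self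
      have h2 : (2 : ℕ) ^ L ≤ Fintype.card F ^ (c * L) := by
        calc (2 : ℕ) ^ L ≤ Fintype.card F ^ L := Nat.pow_le_pow_left hq2 L
          _ ≤ Fintype.card F ^ (c * L) :=
            Nat.pow_le_pow_right (by omega) (Nat.le_mul_of_pos_left L hc)
      calc L ≤ 2 ^ L := le_of_lt h1
        _ ≤ Fintype.card F ^ (c * L) := h2
        _ ≤ _ := Nat.le_mul_of_pos_left _ hballpos
    set n₀ := Nat.find hex with hn₀
    have hspec : L ≤
        ((Finset.univ : Finset (Fin ℓ → F)).filter (fun δ => (suppF δ).card < c)).card *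
          Fintype.card F ^ (c * n₀) := Nat.find_spec hex
    have hpos : 0 < n₀ := by
      rcases Nat.eq_zero_or_pos n₀ with h0 | h
      · exfalso
        rw [h0, Nat.mul_zero, pow_zero, Nat.mul_one] at hspec
        omega
      · exact h
    have hmin :
        ((Finset.univ : Finset (Fin ℓ → F)).filter (fun δ => (suppF δ).card < c)).card *
          Fintype.card F ^ (c * (n₀ - 1)) < L := by
      have := Nat.find_min hex (show n₀ - 1 < n₀ by omega)
      omega
    obtain ⟨z, x, A, h1, h2, h3, h4, h5⟩ :=
      cis_core (F := F) (ℓ := ℓ) hc (n₀ - 1) S (by rw [hS]; exact hmin)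
    refine ⟨-z, n₀, fun k => x (k : ℕ) + (-z), ?_, ?_, ?_⟩
    · intro i
      exact Finset.mem_image_of_mem _ (h1 (i : ℕ) (by have := i.isLt; omega))
    · intro j
      have hj : (j : ℕ) ≤ n₀ - 1 := by have := j.isLt; omega
      have hsub : ↑(A (j : ℕ)) ⊆ (Function.support (x (j : ℕ) + -z) \
          ⋃ (i : Fin n₀) (_ : i < j), Function.support (x (i : ℕ) + -z)) := by
        intro a ha
        constructor
        · have hne : x (j : ℕ) a - z a ≠ 0 := sub_ne_zero.mpr (h3 (j : ℕ) hj a ha)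
          simp only [Function.mem_support, Pi.add_apply, Pi.neg_apply]
          intro h0
          apply hne
          rw [← h0]; ring
        · intro hmem
          simp only [Set.mem_iUnion, Function.mem_support] at hmem
          obtain ⟨i, hij, hne⟩ := hmem
          apply hne
          have hij' : (i : ℕ) < (j : ℕ) := hij
          have hxi : x (i : ℕ) a = z a := h4 (i : ℕ) (j : ℕ) hij' hj a ha
          simp only [Pi.add_apply, Pi.neg_apply, hxi]
          ring
      have hfin : (Function.support (x (j : ℕ) + -z) \
          ⋃ (i : Fin n₀) (_ : i < j), Function.support (x (i : ℕ) + -z)).Finite :=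
        Set.toFinite _
      have hle := Set.ncard_le_ncard hsub hfin
      rw [Set.ncard_coe_finset, h2 (j : ℕ) hj] at hle
      exact hle
    · have hle : (L : ℝ) ≤ 2 * (M : ℝ) ^ (c - 1) * (Fintype.card F : ℝ) ^ (c * n₀) := by
        have hnat : L ≤ 2 * M ^ (c - 1) * Fintype.card F ^ (c * n₀) :=
          le_trans hspec (Nat.mul_le_mul_right _ hBall_le)
        exact_mod_cast hnat
      exact cis_final_ineq (Fintype.card F) c L n₀ M hq2 hc hM1 hL hle
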